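/- Let θ be a real-valued random variable taking the values √(2+√3) and −√(2+√3) each with probability (3−√3)/12, and the values √(2−√3) and −√(2−√3) each with probability (3+√3)/12, and set Θ := θ³ − 3θ. Then E[Θ] = 0, E[θ·Θ] = 0, E[θ²·Θ] = 0 and E[Θ²] = 2. -/

import Mathlib

open MeasureTheory ProbabilityTheory

theorem stmt1
    (Ω : Type*) [MeasureSpace Ω] [IsProbabilityMeasure (ℙ : Measure Ω)]
    (θ : Ω → ℝ) (hθ : Measurable θ)
    (h1 : ℙ {ω | θ ω = Real.sqrt (2 + Real.sqrt 3)} = ENNReal.ofReal ((3 - Real.sqrt 3) / 12))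
    (h2 : ℙ {ω | θ ω = -Real.sqrt (2 + Real.sqrt 3)} = ENNReal.ofReal ((3 - Real.sqrt 3) / 12))
    (h3 : ℙ {ω | θ ω = Real.sqrt (2 - Real.sqrt 3)} = ENNReal.ofReal ((3 + Real.sqrt 3) / 12))
    (h4 : ℙ {ω | θ ω = -Real.sqrt (2 - Real.sqrt 3)} = ENNReal.ofReal ((3 + Real.sqrt 3) / 12))
    (Θ : Ω → ℝ) (hΘ : Θ = fun ω => (θ ω) ^ 3 - 3 * θ ω) :
    (∫ ω, Θ ω) = 0 ∧ (∫ ω, θ ω * Θ ω) = 0 ∧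
    (∫ ω, (θ ω) ^ 2 * Θ ω) = 0 ∧ (∫ ω, (Θ ω) ^ 2) = 2 := by
  set r := Real.sqrt 3 with hr
  set a := Real.sqrt (2 + r) with ha
  set b := Real.sqrt (2 - r) with hb
  have hr2 : r ^ 2 = 3 := Real.sq_sqrt (by norm_num)
  have hr1 : 1 < r := by nlinarith [Real.sqrt_nonneg 3]
  have hrlt : r < 2 := by nlinarith [Real.sqrt_nonneg 3]
  have ha2 : a ^ 2 = 2 + r := Real.sq_sqrt (by linarith)
  have hb2 : b ^ 2 = 2 - r := Real.sq_sqrt (by linarith)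
  have hapos : 0 < a := Real.sqrt_pos.2 (by linarith)
  have hbpos : 0 < b := Real.sqrt_pos.2 (by linarith)
  have hab : a ≠ b := by
    intro h
    rw [h] at ha2
    nlinarith
  set p : ℝ := (3 - r) / 12 with hp
  set q : ℝ := (3 + r) / 12 with hq
  have hppos : 0 < p := by rw [hp]; nlinarith
  have hqpos : 0 < q := by rw [hq]; nlinarith
  set μ : Measure ℝ := Measure.map θ ℙ with hμ
  have hμprob : IsProbabilityMeasure μ := Measure.isProbabilityMeasure_map hθ.aemeasurable
  have hμsingle : ∀ x : ℝ, μ {x} = ℙ {ω | θ ω = x} := by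
    intro x
    rw [hμ, Measure.map_apply hθ (measurableSet_singleton x)]
    rfl
  have hμa : μ {a} = ENNReal.ofReal p := by rw [hμsingle]; exact h1
  have hμa' : μ {-a} = ENNReal.ofReal p := by rw [hμsingle]; exact h2
  have hμb : μ {b} = ENNReal.ofReal q := by rw [hμsingle]; exact h3
  have hμb' : μ {-b} = ENNReal.ofReal q := by rw [hμsingle]; exact h4
  set s : Set ℝ := {a, -a, b, -b} with hs
  have hsfin : s.Finite := (((Set.finite_singleton (-b)).insert b).insert (-a)).insert a
  have hsmeas : MeasurableSet s := hsfin.measurableSet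
  have hne1 : a ≠ -a := by intro h; nlinarith
  have hne2 : a ≠ -b := by intro h; nlinarith
  have hne3 : (-a) ≠ b := by intro h; nlinarith
  have hne4 : (-a) ≠ -b := by intro h; apply hab; linarith [neg_injective h]
  have hne5 : b ≠ -b := by intro h; nlinarith
  have hμs : μ s = 1 := by
    rw [hs]
    rw [show ({a, -a, b, -b} : Set ℝ) = {a} ∪ ({-a} ∪ ({b} ∪ {-b})) by
      ext x; simp only [Set.mem_insert_iff, Set.mem_singleton_iff, Set.mem_union]]
    rw [measure_union (by
          simp only [Set.disjoint_singleton_left, Set.mem_union, Set.mem_singleton_iff]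
          push_neg
          exact ⟨hne1, hab, hne2⟩) ((measurableSet_singleton (-a)).union
          ((measurableSet_singleton b).union (measurableSet_singleton (-b)))),
        measure_union (by
          simp only [Set.disjoint_singleton_left, Set.mem_union, Set.mem_singleton_iff]
          push_neg
          exact ⟨hne3, hne4⟩)
          ((measurableSet_singleton b).union (measurableSet_singleton (-b))),
        measure_union (by
          simp only [Set.disjoint_singleton_left, Set.mem_singleton_iff]
          exact hne5) (measurableSet_singleton (-b))]
    rw [hμa, hμa', hμb, hμb']
    rw [← ENNReal.ofReal_add hqpos.le hqpos.le, ← ENNReal.ofReal_add hppos.le (by positivity),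
        ← ENNReal.ofReal_add hppos.le (by positivity)]
    rw [show p + (p + (q + q)) = 1 by rw [hp, hq]; ring]
    exact ENNReal.ofReal_one
  have hcompl : μ sᶜ = 0 := by
    rw [measure_compl hsmeas (measure_ne_top μ s), hμs, measure_univ, tsub_self]
  have hμsc : ∀ᵐ x ∂μ, x ∈ s := by
    rw [ae_iff]
    exact hcompl
  have key : ∀ f : ℝ → ℝ, Continuous f →
      (∫ ω, f (θ ω)) = p * f a + p * f (-a) + q * f b + q * f (-b) := by
    intro f hf
    have h0 : (∫ ω, f (θ ω)) = ∫ x, f x ∂μ :=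
      (integral_map hθ.aemeasurable hf.aestronglyMeasurable).symm
    have hrs : μ.restrict s = μ := Measure.restrict_eq_self_of_ae_mem hμsc
    have hint : IntegrableOn f s μ := hf.continuousOn.integrableOn_compact hsfin.isCompact
    have hfin : s = (({a, -a, b, -b} : Finset ℝ) : Set ℝ) := by simp [hs]
    have h1' : (∫ x, f x ∂μ) = ∫ x in s, f x ∂μ := by rw [hrs]
    rw [h0, h1', hfin, integral_finset _ (by rwa [← hfin])]
    rw [Finset.sum_insert (by
          simp only [Finset.mem_insert, Finset.mem_singleton]
          push_neg
          exact ⟨hne1, hab, hne2⟩),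
        Finset.sum_insert (by
          simp only [Finset.mem_insert, Finset.mem_singleton]
          push_neg
          exact ⟨hne3, hne4⟩),
        Finset.sum_insert (by simpa using hne5), Finset.sum_singleton]
    simp only [Measure.real]
    rw [hμa, hμa', hμb, hμb', ENNReal.toReal_ofReal hppos.le, ENNReal.toReal_ofReal hqpos.le]
    simp only [smul_eq_mul]
    ring
  have e2a : a ^ 2 * (a ^ 2 - 3) = r + 1 := by rw [ha2]; linear_combination hr2
  have e2b : b ^ 2 * (b ^ 2 - 3) = 1 - r := by rw [hb2]; linear_combination hr2
  have e3a : (a ^ 2 - 3) ^ 2 * a ^ 2 = 2 := by rw [ha2]; linear_combination r * hr2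
  have e3b : (b ^ 2 - 3) ^ 2 * b ^ 2 = 2 := by rw [hb2]; linear_combination (-r) * hr2
  subst hΘ
  refine ⟨?_, ?_, ?_, ?_⟩
  · have h := key (fun x => x ^ 3 - 3 * x) ((continuous_pow 3).sub (continuous_const.mul continuous_id))
    simp only at h ⊢
    rw [h]; ring
  · have h := key (fun x => x * (x ^ 3 - 3 * x)) (continuous_id.mul ((continuous_pow 3).sub (continuous_const.mul continuous_id)))
    simp only at h ⊢
    rw [h, hp, hq]
    linear_combination (2 * (3 - r) / 12) * e2a + (2 * (3 + r) / 12) * e2b - (1 / 3) * hr2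
  · have h := key (fun x => x ^ 2 * (x ^ 3 - 3 * x)) ((continuous_pow 2).mul ((continuous_pow 3).sub (continuous_const.mul continuous_id)))
    simp only at h ⊢
    rw [h]; ring
  · have h := key (fun x => (x ^ 3 - 3 * x) ^ 2) (((continuous_pow 3).sub (continuous_const.mul continuous_id)).pow 2)
    simp only at h ⊢
    rw [h, hp, hq]
    linear_combination ((3 - r) / 6) * e3a + ((3 + r) / 6) * e3b
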